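/- (Induction step in the proof of Theorem 1) Let N ≥ 2, let p ≠ c be indices in Fin N, and let u : Fin N → {0,1} with u(p) = 0; let ū be the bitwise complement of u, and for a bit string x and b ∈ {0,1} let x^{c→b} denote x with its value at c replaced by b. Then exp(−(iπ/4)·Z_pY_c) applied to the vector (1/2)(|u^{c→0}⟩ + |u^{c→1}⟩ + |ū^{c→0}⟩ + |ū^{c→1}⟩) equals (|u^{c→1}⟩ + |ū^{c→0}⟩)/√2. -/

import Mathlib

open Matrix

noncomputable section

/-- An `N`-qubit state: a vector in `ℂ^({0,1}^N)` indexed by bit strings. -/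
abbrev QState (N : ℕ) := (Fin N → Fin 2) → ℂ

/-- An `N`-qubit operator: a `2^N × 2^N` complex matrix indexed by bit strings. -/
abbrev QOp (N : ℕ) := Matrix (Fin N → Fin 2) (Fin N → Fin 2) ℂ

def PauliX : Matrix (Fin 2) (Fin 2) ℂ := !![0, 1; 1, 0]
def PauliY : Matrix (Fin 2) (Fin 2) ℂ := !![0, -Complex.I; Complex.I, 0]
def PauliZ : Matrix (Fin 2) (Fin 2) ℂ := !![1, 0; 0, -1]

/-- The Kronecker (tensor) product `⊗ₖ P k` of one `2 × 2` matrix per qubit. -/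
def pauliString {N : ℕ} (P : Fin N → Matrix (Fin 2) (Fin 2) ℂ) : QOp N :=
  fun x y => ∏ k, P k (x k) (y k)

/-- The operator acting as `A` on qubit `i`, `B` on qubit `j` and identity elsewhere. -/
def twoQubitOp {N : ℕ} (A B : Matrix (Fin 2) (Fin 2) ℂ) (i j : Fin N) : QOp N :=
  pauliString (fun k => if k = i then A else if k = j then B else 1)

/-- Computational basis vector `|x⟩`. -/
def ket {N : ℕ} (x : Fin N → Fin 2) : QState N := fun y => if y = x then 1 else 0

/-- `|+⟩^{⊗N}`, the uniform vector with all coordinates `2^{-N/2}`. -/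
def plusN (N : ℕ) : QState N := fun _ => (((Real.sqrt 2)⁻¹ : ℝ) : ℂ) ^ N

/-- Expectation value `⟨ψ| A |ψ⟩`. -/
def expval {N : ℕ} (ψ : QState N) (A : QOp N) : ℂ :=
  ∑ x, (starRingEnd ℂ) (ψ x) * (A *ᵥ ψ) x

/-- The set of edges of `G`, each listed once as an ordered pair `(i,j)` with `i < j`. -/
def edgePairs {N : ℕ} (G : SimpleGraph (Fin N)) [DecidableRel G.Adj] :
    Finset (Fin N × Fin N) :=
  Finset.univ.filter (fun p : Fin N × Fin N => p.1 < p.2 ∧ G.Adj p.1 p.2)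

/-- The cut size `C(x)`: the number of edges `(i,j)` of `G` with `x i ≠ x j`. -/
def cutSize {N : ℕ} (G : SimpleGraph (Fin N)) [DecidableRel G.Adj] (x : Fin N → Fin 2) : ℕ :=
  ((edgePairs G).filter (fun p => x p.1 ≠ x p.2)).card

/-- The MaxCut Hamiltonian `H_MC = ∑_{(i,j) ∈ E} Z_i Z_j`. -/
def HMC {N : ℕ} (G : SimpleGraph (Fin N)) [DecidableRel G.Adj] : QOp N :=
  ∑ p ∈ edgePairs G, twoQubitOp PauliZ PauliZ p.1 p.2

/-- The cut-counting observable `Ĉ = (1/2) ∑_{(i,j) ∈ E} (1 - Z_i Z_j)`. -/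
def Chat {N : ℕ} (G : SimpleGraph (Fin N)) [DecidableRel G.Adj] : QOp N :=
  (1/2 : ℂ) • ∑ p ∈ edgePairs G, ((1 : QOp N) - twoQubitOp PauliZ PauliZ p.1 p.2)

/-- The gate `e^{-iθ Z_i Y_j / 2}`. -/
def gateZY {N : ℕ} (θ : ℝ) (i j : Fin N) : QOp N :=
  NormedSpace.exp ((-Complex.I * ((θ : ℂ) / 2)) • twoQubitOp PauliZ PauliY i j)

/-- The gate `e^{-iθ Y_i Z_j / 2}`. -/
def gateYZ {N : ℕ} (θ : ℝ) (i j : Fin N) : QOp N :=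
  NormedSpace.exp ((-Complex.I * ((θ : ℂ) / 2)) • twoQubitOp PauliY PauliZ i j)

end

lemma aux_exp_smul_of_sq {𝔸 : Type*} [NormedRing 𝔸] [NormedAlgebra ℂ 𝔸]
    [CompleteSpace 𝔸] (A : 𝔸) (h : A * A = 1) (t : ℂ) :
    NormedSpace.exp (t • A) = Complex.cosh t • (1 : 𝔸) + Complex.sinh t • A := by
  have hA2 : A ^ 2 = 1 := by rw [pow_two, h]
  rw [NormedSpace.exp_eq_tsum ℂ]
  refine HasSum.tsum_eq ?_
  refine HasSum.even_add_odd ?_ ?_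
  · have := (Complex.hasSum_cosh t).smul_const (1 : 𝔸)
    convert this using 2 with k
    rw [smul_pow, pow_mul, pow_mul, hA2, one_pow, smul_smul, inv_mul_eq_div]
  · have := (Complex.hasSum_sinh t).smul_const A
    convert this using 2 with k
    rw [smul_pow, pow_succ A, pow_mul A, hA2, one_pow, one_mul, smul_smul, inv_mul_eq_div,
      pow_succ t, pow_mul t]

lemma aux_pauliString_mul {N : ℕ} (P Q : Fin N → Matrix (Fin 2) (Fin 2) ℂ) :
    pauliString P * pauliString Q = pauliString (fun k => P k * Q k) := by
  ext x y
  simp only [Matrix.mul_apply, pauliString, ← Finset.prod_mul_distrib]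
  rw [Finset.prod_univ_sum, Fintype.piFinset_univ]

lemma aux_pauliString_one {N : ℕ} :
    pauliString (fun _ : Fin N => (1 : Matrix (Fin 2) (Fin 2) ℂ)) = 1 := by
  ext x y
  simp [pauliString, Matrix.one_apply, Finset.prod_boole, funext_iff]

lemma aux_PauliZ_sq : PauliZ * PauliZ = 1 := by
  ext i j
  fin_cases i <;> fin_cases j <;>
    simp [PauliZ, Matrix.mul_apply, Fin.sum_univ_two, Matrix.one_apply]

lemma aux_PauliY_sq : PauliY * PauliY = 1 := by
  ext i j
  fin_cases i <;> fin_cases j <;>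
    simp [PauliY, Matrix.mul_apply, Fin.sum_univ_two, Matrix.one_apply, Complex.I_mul_I]

lemma aux_twoQubitOp_apply {N : ℕ} (A B : Matrix (Fin 2) (Fin 2) ℂ) (p c : Fin N)
    (hpc : p ≠ c) (y x : Fin N → Fin 2) :
    twoQubitOp A B p c y x =
      A (y p) (x p) * B (y c) (x c) *
        (if ∀ k, k ≠ p → k ≠ c → y k = x k then 1 else 0) := by
  classical
  unfold twoQubitOp pauliString
  rw [← Finset.mul_prod_erase Finset.univ _ (Finset.mem_univ p),
    ← Finset.mul_prod_erase _ _ (Finset.mem_erase.mpr ⟨Ne.symm hpc, Finset.mem_univ c⟩)]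
  have h1 : ∀ k ∈ (Finset.univ.erase p).erase c,
      (if k = p then A else if k = c then B else 1) (y k) (x k)
        = if y k = x k then (1:ℂ) else 0 := by
    intro k hk
    simp only [Finset.mem_erase] at hk
    rw [if_neg hk.2.1, if_neg hk.1, Matrix.one_apply]
  rw [Finset.prod_congr rfl h1, Finset.prod_boole]
  have h2 : (∀ k ∈ (Finset.univ.erase p).erase c, y k = x k) ↔
      (∀ k, k ≠ p → k ≠ c → y k = x k) := by
    simp only [Finset.mem_erase, Finset.mem_univ, and_true]
    constructor
    · intro h k hkp hkc; exact h k ⟨hkc, hkp⟩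
    · intro h k hk; exact h k hk.2 hk.1
  beta_reduce
  rw [if_pos rfl, if_neg (Ne.symm hpc), if_pos rfl]
  simp only [h2]
  ring

lemma aux_mulVec_ket {N : ℕ} (M : QOp N) (x : Fin N → Fin 2) :
    M *ᵥ ket x = fun y => M y x := by
  funext y
  simp [Matrix.mulVec, dotProduct, ket, mul_ite]

lemma fin2_cases : ∀ a : Fin 2, a = 0 ∨ a = 1 := by decide

lemma aux_ZY_mulVec {N : ℕ} (p c : Fin N) (hpc : p ≠ c) (x : Fin N → Fin 2) :
    twoQubitOp PauliZ PauliY p c *ᵥ ket x =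
      ((if x p = 0 then 1 else -1) * (if x c = 0 then Complex.I else -Complex.I)) •
        ket (Function.update x c (1 - x c)) := by
  rw [aux_mulVec_ket]
  funext y
  rw [aux_twoQubitOp_apply _ _ _ _ hpc]
  simp only [Pi.smul_apply, ket, smul_eq_mul]
  by_cases hy : y = Function.update x c (1 - x c)
  · subst hy
    rw [if_pos rfl]
    have hp : Function.update x c (1 - x c) p = x p := Function.update_of_ne hpc _ _
    have hc : Function.update x c (1 - x c) c = 1 - x c := Function.update_self _ _ _
    have hcond : ∀ k, k ≠ p → k ≠ c → Function.update x c (1 - x c) k = x k := by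
      intro k _ hkc; exact Function.update_of_ne hkc _ _
    rw [if_pos hcond, hp, hc]
    rcases fin2_cases (x p) with h | h <;> rcases fin2_cases (x c) with h' | h' <;>
      rw [h, h'] <;>
      norm_num [PauliZ, PauliY, show (1 - 0 : Fin 2) = 1 from rfl,
        show (1 - 1 : Fin 2) = 0 from rfl]
  · rw [if_neg hy, mul_zero]
    by_cases hcond : ∀ k, k ≠ p → k ≠ c → y k = x k
    · by_cases hp : y p = x p
      · by_cases hc : y c = x c
        · have hY : PauliY (y c) (x c) = 0 := by
            rw [hc]
            rcases fin2_cases (x c) with h' | h' <;> rw [h'] <;> simp [PauliY]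
          rw [hY, mul_zero, zero_mul]
        · exfalso
          apply hy
          funext k
          by_cases hkc : k = c
          · subst hkc
            rw [Function.update_self]
            have hfin : ∀ a b : Fin 2, a ≠ b → a = 1 - b := by decide
            exact hfin _ _ hc
          · rw [Function.update_of_ne hkc]
            by_cases hkp : k = p
            · subst hkp; exact hp
            · exact hcond k hkp hkc
      · have hz : PauliZ (y p) (x p) = 0 := by
          rcases fin2_cases (y p) with h | h <;> rcases fin2_cases (x p) with h' | h' <;>
            rw [h, h'] <;> first
            | (exact absurd (h.trans h'.symm) hp)
            | simp [PauliZ]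
        rw [hz, zero_mul, zero_mul]
    · rw [if_neg hcond, mul_zero]

lemma aux_A_sq {N : ℕ} (p c : Fin N) :
    twoQubitOp PauliZ PauliY p c * twoQubitOp PauliZ PauliY p c = 1 := by
  unfold twoQubitOp
  rw [aux_pauliString_mul]
  have : (fun k : Fin N => (if k = p then PauliZ else if k = c then PauliY else 1) *
      (if k = p then PauliZ else if k = c then PauliY else 1)) =
      fun _ => (1 : Matrix (Fin 2) (Fin 2) ℂ) := by
    funext k
    split_ifs with h1 h2
    · exact aux_PauliZ_sq
    · exact aux_PauliY_sq
    · exact one_mul 1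
  rw [this, aux_pauliString_one]


/-- **induction step of Theorem 1.** For `p ≠ c` and a bit string `u` with
`u p = 0`, applying `exp (−(iπ/4)·Z_p Y_c)` to
`(1/2)(|u^{c→0}⟩ + |u^{c→1}⟩ + |ū^{c→0}⟩ + |ū^{c→1}⟩)` yields
`(|u^{c→1}⟩ + |ū^{c→0}⟩)/√2`. -/
theorem gateZY_pi_half_induction_step {N : ℕ} (hN : 2 ≤ N) (p c : Fin N) (hpc : p ≠ c)
    (u : Fin N → Fin 2) (hup : u p = 0) :
    NormedSpace.exp ((-Complex.I * ((Real.pi : ℂ) / 4)) • twoQubitOp PauliZ PauliY p c) *ᵥ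
      ((1 / 2 : ℂ) • (ket (Function.update u c 0) + ket (Function.update u c 1)
        + ket (Function.update (fun k => 1 - u k) c 0)
        + ket (Function.update (fun k => 1 - u k) c 1)))
      = (((Real.sqrt 2)⁻¹ : ℝ) : ℂ) •
          (ket (Function.update u c 1) + ket (Function.update (fun k => 1 - u k) c 0)) := by
  letI : SeminormedRing (QOp N) := Matrix.linftyOpSemiNormedRing
  letI : NormedRing (QOp N) := Matrix.linftyOpNormedRing
  letI : NormedAlgebra ℂ (QOp N) := Matrix.linftyOpNormedAlgebra
  set t : ℂ := -Complex.I * ((Real.pi : ℂ) / 4) with ht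
  set A := twoQubitOp PauliZ PauliY p c with hA
  have key := aux_exp_smul_of_sq A (aux_A_sq p c) t
  erw [key]
  -- values of cosh and sinh
  have hr2 : (Real.sqrt 2)⁻¹ = Real.sqrt 2 / 2 := by
    rw [eq_div_iff (by norm_num : (2:ℝ) ≠ 0), inv_mul_eq_div, div_eq_iff
      (Real.sqrt_pos.mpr (by norm_num)).ne', Real.mul_self_sqrt (by norm_num)]
  have ht' : t = ((-(Real.pi / 4) : ℝ) : ℂ) * Complex.I := by
    rw [ht]; push_cast; ring
  have hcosh : Complex.cosh t = (((Real.sqrt 2)⁻¹ : ℝ) : ℂ) := by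
    rw [ht', Complex.cosh_mul_I, ← Complex.ofReal_cos, Real.cos_neg,
      Real.cos_pi_div_four, hr2]
  have hsinh : Complex.sinh t = -(((Real.sqrt 2)⁻¹ : ℝ) : ℂ) * Complex.I := by
    rw [ht', Complex.sinh_mul_I, ← Complex.ofReal_sin, Real.sin_neg,
      Real.sin_pi_div_four, hr2]
    push_cast; ring
  -- action of A on the four kets
  have hvp : (1 : Fin 2) - u p = 1 := by rw [hup]; decide
  have e0 : A *ᵥ ket (Function.update u c 0) = Complex.I • ket (Function.update u c 1) := by
    rw [hA, aux_ZY_mulVec p c hpc]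
    rw [Function.update_idem]
    simp [Function.update_of_ne hpc, hup, show (1 - 0 : Fin 2) = 1 from rfl]
  have e1 : A *ᵥ ket (Function.update u c 1) = -Complex.I • ket (Function.update u c 0) := by
    rw [hA, aux_ZY_mulVec p c hpc]
    rw [Function.update_idem]
    simp [Function.update_of_ne hpc, hup, show (1 - 1 : Fin 2) = 0 from rfl]
  have e2 : A *ᵥ ket (Function.update (fun k => 1 - u k) c 0)
      = -Complex.I • ket (Function.update (fun k => 1 - u k) c 1) := by
    rw [hA, aux_ZY_mulVec p c hpc]
    rw [Function.update_idem]
    simp [Function.update_of_ne hpc, hvp, show (1 - 0 : Fin 2) = 1 from rfl]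
  have e3 : A *ᵥ ket (Function.update (fun k => 1 - u k) c 1)
      = Complex.I • ket (Function.update (fun k => 1 - u k) c 0) := by
    rw [hA, aux_ZY_mulVec p c hpc]
    rw [Function.update_idem]
    simp [Function.update_of_ne hpc, hvp, show (1 - 1 : Fin 2) = 0 from rfl]
  rw [Matrix.add_mulVec, Matrix.smul_mulVec, Matrix.smul_mulVec,
    Matrix.one_mulVec, Matrix.mulVec_smul, Matrix.mulVec_add, Matrix.mulVec_add,
    Matrix.mulVec_add, e0, e1, e2, e3, hcosh, hsinh]
  funext z
  simp only [Pi.add_apply, Pi.smul_apply, smul_eq_mul]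
  set r : ℂ := (((Real.sqrt 2)⁻¹ : ℝ) : ℂ)
  linear_combination (r / 2 * (ket (Function.update u c 0) z
    - ket (Function.update u c 1) z
    - ket (Function.update (fun k => 1 - u k) c 0) z
    + ket (Function.update (fun k => 1 - u k) c 1) z)) * Complex.I_sq
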